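/- Assume the pushforward measures of both f and g are atomless. Then the following are equivalent: (i) for every t ∈ [0,1] there exists t' ∈ [0,1] such that the threshold-t decision on f and the threshold-t' decision on g agree μ-almost everywhere; (ii) for μ⊗μ-almost every pair (x,x') ∈ X × X, f(x) ≤ f(x') implies g(x) ≤ g(x'). -/

import Mathlib

open MeasureTheory ENNReal


lemma prodNullDiag {X : Type*} [MeasurableSpace X] (μ : Measure X) [IsProbabilityMeasure μ]
    (f : X → ℝ) (hf : Measurable f) (hfA : ∀ c : ℝ, μ {x | f x = c} = 0) :
    μ.prod μ {q : X × X | f q.1 = f q.2} = 0 := by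
  have hm : MeasurableSet {q : X × X | f q.1 = f q.2} :=
    measurableSet_eq_fun (hf.comp measurable_fst) (hf.comp measurable_snd)
  rw [Measure.prod_apply hm]
  have : ∀ x : X, μ (Prod.mk x ⁻¹' {q : X × X | f q.1 = f q.2}) = 0 := by
    intro x
    have : (Prod.mk x ⁻¹' {q : X × X | f q.1 = f q.2}) = {y | f y = f x} := by
      ext y; simp [eq_comm]
    rw [this]; exact hfA (f x)
  simp only [Set.preimage_setOf_eq] at this
  simp [this]


lemma existsThreshold {X : Type*} [MeasurableSpace X] (μ : Measure X) [IsProbabilityMeasure μ]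
    (g : X → ℝ) (hg : Measurable g) (hg01 : ∀ x, g x ∈ Set.Icc (0:ℝ) 1)
    (hgA : ∀ c : ℝ, μ {x | g x = c} = 0) (a : ℝ≥0∞) (ha : a ≤ 1) :
    ∃ t' ∈ Set.Icc (0:ℝ) 1, μ {x | t' < g x} = a := by
  set S : Set ℝ := {s | s ∈ Set.Icc (0:ℝ) 1 ∧ μ {x | s < g x} ≤ a} with hS
  have h1S : (1:ℝ) ∈ S := by
    constructor
    · exact ⟨zero_le_one, le_refl 1⟩
    · have : {x | (1:ℝ) < g x} = (∅ : Set X) := by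
        ext x; simp only [Set.mem_setOf_eq, Set.mem_empty_iff_false, iff_false, not_lt]
        exact (hg01 x).2
      simp [this]
  have hne : S.Nonempty := ⟨1, h1S⟩
  have hbdd : BddBelow S := ⟨0, fun s hs => hs.1.1⟩
  set t' := sInf S with ht'
  have ht'0 : 0 ≤ t' := le_csInf hne fun s hs => hs.1.1
  have ht'1 : t' ≤ 1 := csInf_le hbdd h1S
  -- for every s > t', μ {s < g} ≤ a
  have key : ∀ s : ℝ, t' < s → μ {x | s < g x} ≤ a := by
    intro s hs
    obtain ⟨u, huS, hus⟩ := exists_lt_of_csInf_lt hne hs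
    exact le_trans (measure_mono fun x hx => lt_trans hus hx) huS.2
  -- upper bound
  have upper : μ {x | t' < g x} ≤ a := by
    have hmono : Monotone fun n : ℕ => {x | t' + 1/(n+1) < g x} := by
      intro m n hmn x hx
      simp only [Set.mem_setOf_eq] at hx ⊢
      have h1 : (1:ℝ)/(n+1) ≤ 1/(m+1) := by
        apply one_div_le_one_div_of_le
        · positivity
        · exact_mod_cast by omega
      linarith
    have hsub : {x | t' < g x} ⊆ ⋃ n : ℕ, {x | t' + 1/(n+1) < g x} := by
      intro x hx
      simp only [Set.mem_setOf_eq] at hx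
      obtain ⟨n, hn⟩ := exists_nat_one_div_lt (sub_pos.mpr hx)
      exact Set.mem_iUnion.mpr ⟨n, by simp only [Set.mem_setOf_eq]; push_cast at hn ⊢; linarith⟩
    refine le_trans (measure_mono hsub) ?_
    rw [Directed.measure_iUnion hmono.directed_le]
    refine iSup_le fun n => key _ ?_
    have : (0:ℝ) < 1/((n:ℝ)+1) := by positivity
    linarith
  -- lower bound
  have lower : a ≤ μ {x | t' < g x} := by
    have hle : a ≤ μ {x | t' ≤ g x} := by
      rcases eq_or_lt_of_le ht'0 with h0 | h0
      · have : {x | t' ≤ g x} = Set.univ := by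
          ext x; simp only [Set.mem_setOf_eq, Set.mem_univ, iff_true]
          exact le_trans h0.symm.le (hg01 x).1
        rw [this, measure_univ]; exact ha
      · set s : ℕ → ℝ := fun n => t' - t'/(n+1) with hsdef
        have hslt : ∀ n, s n < t' := by
          intro n; simp only [hsdef, sub_lt_self_iff]; positivity
        have hsmem : ∀ n, a ≤ μ {x | s n < g x} := by
          intro n
          have hns : s n ∉ S := fun h => absurd (csInf_le hbdd h) (not_le.mpr (hslt n))
          have hsIcc : s n ∈ Set.Icc (0:ℝ) 1 := by
            constructor
            · simp only [hsdef, sub_nonneg]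
              apply div_le_self h0.le; push_cast; linarith [Nat.cast_nonneg (α := ℝ) n]
            · linarith [hslt n]
          by_contra h
          exact hns ⟨hsIcc, le_of_lt (not_le.mp h)⟩
        have hInter : (⋂ n, {x | s n < g x}) = {x | t' ≤ g x} := by
          ext x
          simp only [Set.mem_iInter, Set.mem_setOf_eq]
          constructor
          · intro h
            have htend : Filter.Tendsto s Filter.atTop (nhds t') := by
              have : Filter.Tendsto (fun n : ℕ => t'/(n+1)) Filter.atTop (nhds 0) := by
                have h2 : Filter.Tendsto (fun n : ℕ => (1:ℝ)/(n+1)) Filter.atTop (nhds 0) :=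
                  tendsto_one_div_add_atTop_nhds_zero_nat
                have := h2.const_mul t'
                simpa [div_eq_mul_inv, one_div, mul_comm] using this
              simpa using Filter.Tendsto.const_sub t' this
            exact le_of_tendsto htend (Filter.Eventually.of_forall fun n => (h n).le)
          · intro h n; exact lt_of_lt_of_le (hslt n) h
        have hanti : Antitone fun n : ℕ => {x | s n < g x} := by
          intro m n hmn x hx
          have : s m ≤ s n := by
            simp only [hsdef]
            have : t'/(n+1) ≤ t'/(m+1) := by
              apply div_le_div_of_nonneg_left h0.le (by positivity)
              exact_mod_cast by omega
            linarith
          exact lt_of_le_of_lt this hx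
        rw [← hInter, Directed.measure_iInter
          (fun n => ((measurableSet_lt measurable_const hg)).nullMeasurableSet)
          hanti.directed_ge ⟨0, measure_ne_top μ _⟩]
        exact le_iInf hsmem
    have hsplit : {x | t' ≤ g x} ⊆ {x | t' < g x} ∪ {x | g x = t'} := by
      intro x hx
      simp only [Set.mem_setOf_eq] at hx
      rcases lt_or_eq_of_le hx with h | h
      · exact Or.inl h
      · exact Or.inr h.symm
    calc a ≤ μ {x | t' ≤ g x} := hle
      _ ≤ μ ({x | t' < g x} ∪ {x | g x = t'}) := measure_mono hsplit
      _ ≤ μ {x | t' < g x} + μ {x | g x = t'} := measure_union_le _ _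
      _ = μ {x | t' < g x} := by rw [hgA t', add_zero]
  exact ⟨t', ⟨ht'0, ht'1⟩, le_antisymm upper lower⟩

theorem threshold_decisions_agree_iff_ae_comonotone
    {X : Type*} [MeasurableSpace X] (μ : Measure X) [IsProbabilityMeasure μ]
    (f g : X → ℝ) (hf : Measurable f) (hg : Measurable g)
    (hf01 : ∀ x, f x ∈ Set.Icc (0 : ℝ) 1) (hg01 : ∀ x, g x ∈ Set.Icc (0 : ℝ) 1)
    (hfAtomless : ∀ c : ℝ, μ.map f {c} = 0) (hgAtomless : ∀ c : ℝ, μ.map g {c} = 0) :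
    (∀ t ∈ Set.Icc (0 : ℝ) 1, ∃ t' ∈ Set.Icc (0 : ℝ) 1,
        (fun x => if t < f x then (1 : ℝ) else 0) =ᵐ[μ]
          (fun x => if t' < g x then (1 : ℝ) else 0)) ↔
    (∀ᵐ q ∂(μ.prod μ), f q.1 ≤ f q.2 → g q.1 ≤ g q.2) := by
  have hfA : ∀ c : ℝ, μ {x | f x = c} = 0 := fun c => by
    have := hfAtomless c
    rwa [Measure.map_apply hf (measurableSet_singleton c)] at this
  have hgA : ∀ c : ℝ, μ {x | g x = c} = 0 := fun c => by
    have := hgAtomless c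
    rwa [Measure.map_apply hg (measurableSet_singleton c)] at this
  constructor
  · -- (i) → (ii)
    intro hi
    have key : ∀ r : ℚ, ∃ N : Set X, μ N = 0 ∧ ∀ x x', x ∉ N → x' ∉ N →
        f x ≤ r → (r:ℝ) < f x' → g x ≤ g x' := by
      intro r
      by_cases hr : (r:ℝ) ∈ Set.Icc (0:ℝ) 1
      · obtain ⟨t', _, heq⟩ := hi r hr
        refine ⟨{x | ¬ ((if (r:ℝ) < f x then (1:ℝ) else 0) =
            (if t' < g x then (1:ℝ) else 0))}, ae_iff.mp heq, ?_⟩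
        intro x x' hx hx' hfx hfx'
        simp only [Set.mem_setOf_eq, not_not] at hx hx'
        rw [if_neg (not_lt.mpr hfx)] at hx
        rw [if_pos hfx'] at hx'
        by_cases hgx : t' < g x
        · rw [if_pos hgx] at hx; norm_num at hx
        · by_cases hgx' : t' < g x'
          · exact le_trans (not_lt.mp hgx) hgx'.le
          · rw [if_neg hgx'] at hx'; norm_num at hx'
      · refine ⟨∅, measure_empty, fun x x' _ _ hfx hfx' => absurd ?_ hr⟩
        exact ⟨le_trans (hf01 x).1 hfx, le_of_lt (lt_of_lt_of_le hfx' (hf01 x').2)⟩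
    choose N hN0 hNspec using key
    rw [Filter.eventually_iff, mem_ae_iff]
    have hsub : {q : X × X | f q.1 ≤ f q.2 → g q.1 ≤ g q.2}ᶜ ⊆
        {q : X × X | f q.1 = f q.2} ∪
        ⋃ r : ℚ, ((N r ×ˢ (Set.univ : Set X)) ∪ ((Set.univ : Set X) ×ˢ N r)) := by
      intro q hq
      simp only [Set.mem_compl_iff, Set.mem_setOf_eq, _root_.not_imp] at hq
      obtain ⟨hfq, hgq⟩ := hq
      rcases eq_or_lt_of_le hfq with heq | hlt
      · exact Or.inl heq
      · right
        obtain ⟨r, hr1, hr2⟩ := exists_rat_btwn hlt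
        refine Set.mem_iUnion.mpr ⟨r, ?_⟩
        by_cases h1 : q.1 ∈ N r
        · exact Or.inl ⟨h1, Set.mem_univ _⟩
        · by_cases h2 : q.2 ∈ N r
          · exact Or.inr ⟨Set.mem_univ _, h2⟩
          · exact absurd (hNspec r q.1 q.2 h1 h2 hr1.le hr2) hgq
    refine measure_mono_null hsub ?_
    apply measure_union_null
    · exact prodNullDiag μ f hf hfA
    · apply measure_iUnion_null
      intro r
      apply measure_union_null
      · rw [Measure.prod_prod, hN0 r, zero_mul]
      · rw [Measure.prod_prod, hN0 r, mul_zero]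
  · -- (ii) → (i)
    intro hii t ht
    have ha : μ {x | t < f x} ≤ 1 := prob_le_one
    obtain ⟨t', ht'Icc, hmeq⟩ := existsThreshold μ g hg hg01 hgA (μ {x | t < f x}) ha
    refine ⟨t', ht'Icc, ?_⟩
    set A := {x | t < f x} with hA
    set B := {x | t' < g x} with hB
    have hAm : MeasurableSet A := measurableSet_lt measurable_const hf
    have hBm : MeasurableSet B := measurableSet_lt measurable_const hg
    have hdAB : μ (A \ B) = μ A - μ (A ∩ B) := by
      rw [← Set.diff_self_inter]
      exact measure_diff Set.inter_subset_left (hAm.inter hBm).nullMeasurableSet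
        (measure_ne_top μ _)
    have hdBA : μ (B \ A) = μ A - μ (A ∩ B) := by
      have h1 : μ (B \ A) = μ B - μ (B ∩ A) := by
        rw [← Set.diff_self_inter]
        exact measure_diff Set.inter_subset_left (hBm.inter hAm).nullMeasurableSet
          (measure_ne_top μ _)
      rw [h1, hmeq, Set.inter_comm]
    have hDeq : μ (A \ B) = μ (B \ A) := by rw [hdAB, hdBA]
    -- the rectangle (B \ A) ×ˢ (A \ B) is contained in the bad set
    have hrect : (B \ A) ×ˢ (A \ B) ⊆ {q : X × X | ¬ (f q.1 ≤ f q.2 → g q.1 ≤ g q.2)} := by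
      rintro ⟨x, x'⟩ ⟨⟨hxB, hxA⟩, hx'A, hx'B⟩
      simp only [hA, hB, Set.mem_setOf_eq] at hxB hxA hx'A hx'B
      simp only [Set.mem_setOf_eq]
      intro himp
      exact absurd (himp (le_trans (not_lt.mp hxA) hx'A.le))
        (not_le.mpr (lt_of_le_of_lt (not_lt.mp hx'B) hxB))
    have hbad : μ.prod μ ((B \ A) ×ˢ (A \ B)) = 0 :=
      measure_mono_null hrect (ae_iff.mp hii)
    rw [Measure.prod_prod] at hbad
    have hzero : μ (A \ B) = 0 ∧ μ (B \ A) = 0 := by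
      rcases mul_eq_zero.mp hbad with h | h
      · exact ⟨hDeq.trans h, h⟩
      · exact ⟨h, hDeq.symm.trans h⟩
    rw [Filter.EventuallyEq, ae_iff]
    have hsub : {x | ¬ ((if t < f x then (1:ℝ) else 0) = if t' < g x then (1:ℝ) else 0)} ⊆
        (A \ B) ∪ (B \ A) := by
      intro x hx
      simp only [Set.mem_setOf_eq] at hx
      by_cases hxA : t < f x
      · by_cases hxB : t' < g x
        · rw [if_pos hxA, if_pos hxB] at hx; exact absurd rfl hx
        · exact Or.inl ⟨hxA, hxB⟩
      · by_cases hxB : t' < g x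
        · exact Or.inr ⟨hxB, hxA⟩
        · rw [if_neg hxA, if_neg hxB] at hx; exact absurd rfl hx
    exact measure_mono_null hsub (measure_union_null hzero.1 hzero.2)
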